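/- arXiv:2409.15537 — 2 statements merged into one kernel-verified Lean document; each statement's English description precedes it below -/
import Mathlib

section
/- Let ν be a multi-index and (b_j) a sequence of nonnegative reals, and let C_g ≥ 0. If for all m ≤ ν one has a bound a_m ≤ C_g · |m|! · b^m (with b^m = ∏ b_j^{m_j}), then ∑_{m ≤ ν} (ν choose m) · a_m · a_{ν−m} ≤ C_g² · (|ν|+1)! · b^ν. -/
open Finset

lemma vander : ∀ (s : ℕ) (ν : Fin s → ℕ) (ℓ : ℕ),
    (∑ m ∈ Finset.Iic ν, if (∑ j, m j) = ℓ then ∏ j, (ν j).choose (m j) else 0)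
      = (∑ j, ν j).choose ℓ := by
  intro s
  induction s with
  | zero =>
    intro ν ℓ
    have h1 : (Finset.Iic ν) = {ν} := by
      ext m; simp [Subsingleton.elim m ν]
    rw [h1, Finset.sum_singleton]
    simp only [Finset.univ_eq_empty, Finset.sum_empty, Finset.prod_empty]
    cases ℓ <;> simp
  | succ s IH =>
    intro ν ℓ
    have hIic : ∀ (μ : Fin (s+1) → ℕ), Finset.Iic μ = Fintype.piFinset fun j => Finset.Iic (μ j) := by
      intro μ; ext m; simp [Fintype.mem_piFinset, Pi.le_def]
    have hIic' : ∀ (μ : Fin s → ℕ), Finset.Iic μ = Fintype.piFinset fun j => Finset.Iic (μ j) := by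
      intro μ; ext m; simp [Fintype.mem_piFinset, Pi.le_def]
    have hmap : (Fintype.piFinset fun j => Finset.Iic (ν j)) =
        ((Finset.Iic (ν 0)) ×ˢ Fintype.piFinset (Fin.tail fun j => Finset.Iic (ν j))).map
          (Fin.consEquiv _).toEmbedding := by
      have := Finset.filter_piFinset_eq_map_consEquiv (fun j => Finset.Iic (ν j))
        (fun _ => True)
      simpa using this
    rw [hIic, hmap, Finset.sum_map, Finset.sum_product]
    have hcons : ∀ (i : ℕ) (t : Fin s → ℕ),
        (Fin.consEquiv (fun _ : Fin (s+1) => ℕ)).toEmbedding (i, t) = Fin.cons i t := fun _ _ => rfl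
    have htail : Fin.tail (fun j : Fin (s+1) => Finset.Iic (ν j)) =
        fun j : Fin s => Finset.Iic (Fin.tail ν j) := rfl
    rw [htail, ← hIic' (Fin.tail ν)]
    set nt := ∑ j, Fin.tail ν j with hnt
    have hsum : ∑ j, ν j = ν 0 + nt := by
      rw [Fin.sum_univ_succ]; rfl
    -- inner sums
    have inner : ∀ i : ℕ,
        (∑ t ∈ Finset.Iic (Fin.tail ν),
          if (∑ j, (Fin.cons i t : Fin (s+1) → ℕ) j) = ℓ then
            ∏ j, (ν j).choose ((Fin.cons i t : Fin (s+1) → ℕ) j) else 0)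
        = (ν 0).choose i * (if i ≤ ℓ then nt.choose (ℓ - i) else 0) := by
      intro i
      have step1 : (∑ t ∈ Finset.Iic (Fin.tail ν),
          if (∑ j, (Fin.cons i t : Fin (s+1) → ℕ) j) = ℓ then
            ∏ j, (ν j).choose ((Fin.cons i t : Fin (s+1) → ℕ) j) else 0)
          = ∑ t ∈ Finset.Iic (Fin.tail ν),
            (ν 0).choose i * (if ((∑ j, t j) = ℓ - i ∧ i ≤ ℓ) then
              ∏ j, (Fin.tail ν j).choose (t j) else 0) := by
        refine Finset.sum_congr rfl fun t _ => ?_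
        simp only [Fin.sum_univ_succ, Fin.cons_zero, Fin.cons_succ, Fin.prod_univ_succ, Fin.tail]
        by_cases hA : i + ∑ j, t j = ℓ
        · rw [if_pos hA, if_pos ⟨by omega, by omega⟩]
        · rw [if_neg hA, if_neg (by omega), mul_zero]
      rw [step1, ← Finset.mul_sum]
      by_cases h : i ≤ ℓ
      · rw [if_pos h]
        have hc : ∀ t : Fin s → ℕ, ((∑ j, t j) = ℓ - i ∧ i ≤ ℓ) = ((∑ j, t j) = ℓ - i) := by
          intro t; simp [h]
        simp only [hc]
        rw [IH (Fin.tail ν) (ℓ - i)]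
      · rw [if_neg h, mul_zero,
          Finset.sum_eq_zero fun (t : Fin s → ℕ) _ => if_neg (by tauto), mul_zero]
    simp only [hcons]
    rw [Finset.sum_congr rfl fun i _ => inner i]
    rw [hsum, Nat.add_choose_eq, Finset.Nat.sum_antidiagonal_eq_sum_range_succ_mk]
    simp only [mul_ite, mul_zero]
    have hL : (∑ i ∈ Finset.Iic (ν 0), if i ≤ ℓ then (ν 0).choose i * nt.choose (ℓ - i) else 0)
        = ∑ i ∈ Finset.range (ν 0 + ℓ + 2),
            (if i ≤ ℓ then (ν 0).choose i * nt.choose (ℓ - i) else 0) := by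
      refine Finset.sum_subset (fun i hi => ?_) (fun i _ hi => ?_)
      · simp only [Finset.mem_Iic] at hi; exact Finset.mem_range.2 (by omega)
      · simp only [Finset.mem_Iic, not_le] at hi
        simp [Nat.choose_eq_zero_of_lt hi]
    have hR : (∑ p ∈ Finset.range (ℓ + 1), (ν 0).choose p * nt.choose (ℓ - p))
        = ∑ i ∈ Finset.range (ν 0 + ℓ + 2),
            (if i ≤ ℓ then (ν 0).choose i * nt.choose (ℓ - i) else 0) := by
      rw [show (∑ p ∈ Finset.range (ℓ + 1), (ν 0).choose p * nt.choose (ℓ - p))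
          = ∑ p ∈ Finset.range (ℓ + 1),
              (if p ≤ ℓ then (ν 0).choose p * nt.choose (ℓ - p) else 0) from
        Finset.sum_congr rfl fun p hp =>
          (if_pos (Nat.lt_succ_iff.1 (Finset.mem_range.1 hp))).symm]
      refine Finset.sum_subset (fun p hp => ?_) (fun p _ hp => ?_)
      · simp only [Finset.mem_range] at hp; exact Finset.mem_range.2 (by omega)
      · simp only [Finset.mem_range, Nat.lt_succ_iff, not_le] at hp
        exact if_neg (by omega)
    rw [hL, hR]

lemma natfact (s : ℕ) (ν : Fin s → ℕ) :
    ∑ m ∈ Finset.Iic ν,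
      (∏ j, (ν j).choose (m j)) * (∑ j, m j).factorial * ((∑ j, ν j) - ∑ j, m j).factorial
      = ((∑ j, ν j) + 1).factorial := by
  set n := ∑ j, ν j with hn
  have hmaps : ∀ m ∈ Finset.Iic ν, (∑ j, m j) ∈ Finset.range (n + 1) := by
    intro m hm
    rw [Finset.mem_Iic] at hm
    exact Finset.mem_range.2 (Nat.lt_succ_of_le (Finset.sum_le_sum fun j _ => hm j))
  rw [← Finset.sum_fiberwise_of_maps_to hmaps]
  have : ∀ ℓ ∈ Finset.range (n + 1),
      (∑ m ∈ Finset.Iic ν with (∑ j, m j) = ℓ,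
        (∏ j, (ν j).choose (m j)) * (∑ j, m j).factorial * (n - ∑ j, m j).factorial)
      = n.factorial := by
    intro ℓ hℓ
    have hℓn : ℓ ≤ n := Nat.lt_succ_iff.1 (Finset.mem_range.1 hℓ)
    calc (∑ m ∈ Finset.Iic ν with (∑ j, m j) = ℓ,
          (∏ j, (ν j).choose (m j)) * (∑ j, m j).factorial * (n - ∑ j, m j).factorial)
        = (∑ m ∈ Finset.Iic ν with (∑ j, m j) = ℓ, (∏ j, (ν j).choose (m j)))
            * ℓ.factorial * (n - ℓ).factorial := by
          rw [Finset.sum_mul, Finset.sum_mul]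
          refine Finset.sum_congr rfl fun m hm => ?_
          rw [(Finset.mem_filter.1 hm).2]
      _ = n.choose ℓ * ℓ.factorial * (n - ℓ).factorial := by
          rw [Finset.sum_filter, vander s ν ℓ, ← hn]
      _ = n.factorial := Nat.choose_mul_factorial_mul_factorial hℓn
  rw [Finset.sum_congr rfl this, Finset.sum_const, Finset.card_range, smul_eq_mul,
    Nat.factorial_succ]

/-- If `a m ≤ C_g · |m|! · b^m` for all `m ≤ ν`, then the binomial convolution
`∑_{m ≤ ν} (ν choose m) a_m a_{ν−m}` is bounded by `C_g² (|ν|+1)! b^ν`. -/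
theorem stmt1 (s : ℕ) (ν : Fin s → ℕ) (b : Fin s → ℝ) (hb : ∀ j, 0 ≤ b j)
    (Cg : ℝ) (hCg : 0 ≤ Cg) (a : (Fin s → ℕ) → ℝ)
    (ha0 : ∀ m, m ≤ ν → 0 ≤ a m)
    (ha : ∀ m, m ≤ ν →
      a m ≤ Cg * (Nat.factorial (∑ j, m j) : ℝ) * ∏ j, b j ^ m j) :
    ∑ m ∈ Finset.Iic ν, (∏ j, ((ν j).choose (m j) : ℝ)) * a m * a (ν - m)
      ≤ Cg ^ 2 * (Nat.factorial ((∑ j, ν j) + 1) : ℝ) * ∏ j, b j ^ ν j := by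
  set n := ∑ j, ν j with hn
  calc ∑ m ∈ Finset.Iic ν, (∏ j, ((ν j).choose (m j) : ℝ)) * a m * a (ν - m)
      ≤ ∑ m ∈ Finset.Iic ν,
          Cg ^ 2 * (((∏ j, (ν j).choose (m j)) * (∑ j, m j).factorial
            * (n - ∑ j, m j).factorial : ℕ) : ℝ) * ∏ j, b j ^ ν j := by
        refine Finset.sum_le_sum fun m hm => ?_
        have hm' : m ≤ ν := Finset.mem_Iic.1 hm
        have hsub : ν - m ≤ ν := fun j => tsub_le_self
        have hsubsum : (∑ j, (ν - m) j) = n - ∑ j, m j := by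
          simp only [Pi.sub_apply]
          rw [hn, eq_tsub_iff_add_eq_of_le (Finset.sum_le_sum fun j _ => hm' j),
            ← Finset.sum_add_distrib]
          exact Finset.sum_congr rfl fun j _ => Nat.sub_add_cancel (hm' j)
        have hbm : ∀ (μ : Fin s → ℕ), (0:ℝ) ≤ ∏ j, b j ^ μ j :=
          fun μ => Finset.prod_nonneg fun j _ => pow_nonneg (hb j) _
        have hC0 : (0:ℝ) ≤ ∏ j, ((ν j).choose (m j) : ℝ) :=
          Finset.prod_nonneg fun j _ => Nat.cast_nonneg _
        have h1 : a m * a (ν - m) ≤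
            (Cg * ((∑ j, m j).factorial : ℝ) * ∏ j, b j ^ m j)
            * (Cg * (((n - ∑ j, m j)).factorial : ℝ) * ∏ j, b j ^ (ν - m) j) := by
          have := ha (ν - m) hsub
          rw [hsubsum] at this
          exact mul_le_mul (ha m hm') this (ha0 _ hsub)
            (mul_nonneg (mul_nonneg hCg (Nat.cast_nonneg _)) (hbm m))
        have hprodb : (∏ j, b j ^ m j) * (∏ j, b j ^ (ν - m) j) = ∏ j, b j ^ ν j := by
          rw [← Finset.prod_mul_distrib]
          refine Finset.prod_congr rfl fun j _ => ?_
          rw [← pow_add, Pi.sub_apply, Nat.add_sub_cancel' (hm' j)]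
        calc (∏ j, ((ν j).choose (m j) : ℝ)) * a m * a (ν - m)
            ≤ (∏ j, ((ν j).choose (m j) : ℝ)) *
              ((Cg * ((∑ j, m j).factorial : ℝ) * ∏ j, b j ^ m j)
              * (Cg * (((n - ∑ j, m j)).factorial : ℝ) * ∏ j, b j ^ (ν - m) j)) := by
              rw [mul_assoc]
              exact mul_le_mul_of_nonneg_left h1 hC0
          _ = Cg ^ 2 * (((∏ j, (ν j).choose (m j)) * (∑ j, m j).factorial
              * (n - ∑ j, m j).factorial : ℕ) : ℝ) * ∏ j, b j ^ ν j := by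
              push_cast
              rw [← hprodb]
              ring
    _ = Cg ^ 2 * (Nat.factorial (n + 1) : ℝ) * ∏ j, b j ^ ν j := by
        rw [← Finset.sum_mul, ← Finset.mul_sum, ← Nat.cast_sum, natfact s ν]
end

section
/- Let (b_j)_{j≥1} be a nonnegative sequence in ℓ^p(ℕ) for some 0 < p ≤ 1, and fix λ with p ≤ λ ≤ 1 and an integer α ≥ 1 with λ > 1/α, and a constant E ≥ 0. If λ < 1, or if λ = 1 and ∑_j b_j < 1/(2α·max(E,1)), then the sum S_s = ∑_{0 ≠ ν ∈ {0,…,α}^s} ((|ν|+2)!)^λ ∏_{j: ν_j>0} (E·2^{δ(ν_j,α)} b_j^{ν_j})^λ is bounded uniformly in s, i.e. sup_s S_s < ∞. -/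
open Finset

namespace Stmt13Aux

lemma pow_rpow_comm {b : ℝ} (hb : 0 ≤ b) (lam : ℝ) (e : ℕ) :
    (b ^ e) ^ lam = (b ^ lam) ^ e := by
  rw [← Real.rpow_natCast b e, ← Real.rpow_natCast (b ^ lam) e,
    ← Real.rpow_mul hb, ← Real.rpow_mul hb, mul_comm]

lemma summable_rpow_mono {b : ℕ → ℝ} (hb : ∀ j, 0 ≤ b j) {p q : ℝ} (hp : 0 < p)
    (hpq : p ≤ q) (hbp : Summable fun j => b j ^ p) : Summable fun j => b j ^ q := by
  have hq : 0 < q := hp.trans_le hpq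
  have hev : ∀ᶠ j in Filter.atTop, b j ^ p < 1 :=
    hbp.tendsto_atTop_zero.eventually_lt_const one_pos
  obtain ⟨N, hN⟩ := Filter.eventually_atTop.1 hev
  rw [← summable_nat_add_iff N]
  have h1 : ∀ j : ℕ, b (j + N) ≤ 1 := by
    intro j
    by_contra hcon
    push_neg at hcon
    have h2 : (1:ℝ) ^ p < b (j + N) ^ p :=
      Real.rpow_lt_rpow (by norm_num) hcon hp
    rw [Real.one_rpow] at h2
    exact absurd (hN (j + N) (Nat.le_add_left _ _)) (not_lt.2 h2.le)
  refine Summable.of_nonneg_of_le (fun j => Real.rpow_nonneg (hb _) _) (fun j => ?_)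
    ((summable_nat_add_iff N).2 hbp)
  rcases eq_or_lt_of_le (hb (j + N)) with h0 | h0
  · rw [← h0, Real.zero_rpow hq.ne', Real.zero_rpow hp.ne']
  · exact Real.rpow_le_rpow_of_exponent_ge h0 (h1 j) hpq

lemma summable_quad_geom {H : ℝ} (h0 : 0 ≤ H) (h1 : H < 1) :
    Summable fun n : ℕ => ((n : ℝ) + 2) * ((n : ℝ) + 1) * H ^ n := by
  have habs : ‖H‖ < 1 := by rwa [Real.norm_of_nonneg h0]
  have h2 := summable_pow_mul_geometric_of_norm_lt_one (R := ℝ) 2 habs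
  have h1' := summable_pow_mul_geometric_of_norm_lt_one (R := ℝ) 1 habs
  have h0' := summable_geometric_of_lt_one h0 h1
  refine ((h2.add (h1'.mul_left 3)).add (h0'.mul_left 2)).congr fun n => ?_
  push_cast
  ring

lemma quad_le_two_four_pow (n : ℕ) : ((n : ℝ) + 2) * ((n : ℝ) + 1) ≤ 2 * 4 ^ n := by
  have h1 : (n : ℝ) + 1 ≤ 2 ^ n := by
    have h' : n + 1 ≤ 2 ^ n := Nat.lt_two_pow_self (n := n)
    exact_mod_cast h' 
  have h2 : (n : ℝ) + 2 ≤ 2 * 2 ^ n := by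
    have h' : n + 2 ≤ 2 ^ (n + 1) := by
      have := Nat.lt_two_pow_self (n := n + 1); omega
    have h'' : (n:ℝ) + 2 ≤ 2 ^ (n + 1) := by exact_mod_cast h'
    rw [pow_succ] at h''
    linarith
  have h4 : (4:ℝ) ^ n = 2 ^ n * 2 ^ n := by
    rw [← mul_pow]; norm_num
  nlinarith [pow_nonneg (by norm_num : (0:ℝ) ≤ 2) n,
    add_nonneg (Nat.cast_nonneg n) (by norm_num : (0:ℝ) ≤ 1)]


set_option maxHeartbeats 1000000 in
lemma master (α : ℕ) (h : ℕ → ℝ) (hh : ∀ j, 0 ≤ h j) (hsum : Summable h)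
    (hH : ∑' j, h j < 1) (s : ℕ) :
    ∑ ν ∈ Finset.Iic (fun _ : Fin s => α),
      (((∑ j, ν j : ℕ) : ℝ) + 2) * (((∑ j, ν j : ℕ) : ℝ) + 1) *
        (Nat.multinomial Finset.univ ν : ℝ) * ∏ j, h j.1 ^ ν j
      ≤ ∑' n : ℕ, ((n : ℝ) + 2) * ((n : ℝ) + 1) * (∑' j, h j) ^ n := by
  classical
  have hH0 : 0 ≤ ∑' j, h j := tsum_nonneg fun j => hh j
  have hterm : ∀ n : ℕ, 0 ≤ ((n : ℝ) + 2) * ((n : ℝ) + 1) * (∑' j, h j) ^ n := by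
    intro n; positivity
  have hmaps : ∀ ν ∈ Finset.Iic (fun _ : Fin s => α), (∑ j, ν j) ∈ Finset.Iic (α * s) := by
    intro ν hν
    rw [Finset.mem_Iic] at hν ⊢
    calc ∑ j, ν j ≤ ∑ _j : Fin s, α := Finset.sum_le_sum fun j _ => hν j
      _ = s * α := by simp [Finset.sum_const, mul_comm]
      _ ≤ α * s := le_of_eq (mul_comm s α)
  rw [← Finset.sum_fiberwise_of_maps_to hmaps]
  have hsfin : ∑ j : Fin s, h j.1 ≤ ∑' j, h j := by
    rw [Fin.sum_univ_eq_sum_range (fun i => h i) s]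
    exact Summable.sum_le_tsum (Finset.range s) (fun i _ => hh i) hsum
  have hsfin0 : 0 ≤ ∑ j : Fin s, h j.1 := Finset.sum_nonneg fun j _ => hh j
  have inner : ∀ n ∈ Finset.Iic (α * s),
      (∑ ν ∈ (Finset.Iic (fun _ : Fin s => α)).filter (fun ν => (∑ j, ν j) = n),
        (((∑ j, ν j : ℕ) : ℝ) + 2) * (((∑ j, ν j : ℕ) : ℝ) + 1) *
          (Nat.multinomial Finset.univ ν : ℝ) * ∏ j, h j.1 ^ ν j)
        ≤ ((n : ℝ) + 2) * ((n : ℝ) + 1) * (∑' j, h j) ^ n := by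
    intro n _
    set F := (Finset.Iic (fun _ : Fin s => α)).filter (fun ν => (∑ j, ν j) = n) with hF
    have step1 : (∑ ν ∈ F,
        (((∑ j, ν j : ℕ) : ℝ) + 2) * (((∑ j, ν j : ℕ) : ℝ) + 1) *
          (Nat.multinomial Finset.univ ν : ℝ) * ∏ j, h j.1 ^ ν j)
        = ((n : ℝ) + 2) * ((n : ℝ) + 1) *
          ∑ ν ∈ F, (Nat.multinomial Finset.univ ν : ℝ) * ∏ j, h j.1 ^ ν j := by
      rw [Finset.mul_sum]
      refine Finset.sum_congr rfl fun ν hν => ?_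
      rw [hF] at hν
      rw [(Finset.mem_filter.1 hν).2]
      ring
    rw [step1]
    have key : (∑ ν ∈ F, (Nat.multinomial Finset.univ ν : ℝ) * ∏ j, h j.1 ^ ν j)
        ≤ (∑' j, h j) ^ n := by
      have hsub : F ⊆ Finset.piAntidiag Finset.univ n := by
        intro ν hν
        rw [hF] at hν
        rw [Finset.mem_piAntidiag]
        exact ⟨(Finset.mem_filter.1 hν).2, fun i _ => Finset.mem_univ i⟩
      refine le_trans (Finset.sum_le_sum_of_subset_of_nonneg hsub fun ν _ _ =>
        mul_nonneg (Nat.cast_nonneg _)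
          (Finset.prod_nonneg fun j _ => pow_nonneg (hh _) _)) ?_
      refine le_trans (le_of_eq
        (Finset.sum_pow_eq_sum_piAntidiag Finset.univ (fun j : Fin s => h j.1) n).symm) ?_
      exact pow_le_pow_left₀ hsfin0 hsfin n
    exact mul_le_mul_of_nonneg_left key (by positivity)
  exact le_trans (Finset.sum_le_sum inner)
    (Summable.sum_le_tsum (Finset.Iic (α * s)) (fun n _ => hterm n) (summable_quad_geom hH0 hH))

lemma master2 (α : ℕ) (hα : 1 ≤ α) (q : ℕ → ℝ) (hq : ∀ j, 0 ≤ q j) (C : ℝ) (hC1 : 1 ≤ C)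
    (hqC : ∀ j, q j ≤ C) (hsum : Summable q) (s : ℕ) :
    ∑ ν ∈ Finset.Iic (fun _ : Fin s => α), ∏ j, q j.1 ^ ν j
      ≤ Real.exp ((α : ℝ) * C ^ (α - 1) * ∑' j, q j) := by
  classical
  have hC0 : (0:ℝ) ≤ C := le_trans zero_le_one hC1
  have hcoef : (0:ℝ) ≤ (α : ℝ) * C ^ (α - 1) := by positivity
  have hbox : Finset.Iic (fun _ : Fin s => α)
      = Fintype.piFinset (fun _ : Fin s => Finset.Iic α) := by
    ext ν
    rw [Finset.mem_Iic, Fintype.mem_piFinset]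
    simp [Pi.le_def]
  rw [hbox, ← Finset.prod_univ_sum]
  have key : ∀ j : Fin s, ∑ e ∈ Finset.Iic α, q j.1 ^ e
      ≤ Real.exp ((α : ℝ) * C ^ (α - 1) * q j.1) := by
    intro j
    have h0mem : (0 : ℕ) ∈ Finset.Iic α := by simp
    have hsplit : ∑ e ∈ Finset.Iic α, q j.1 ^ e
        = 1 + ∑ e ∈ (Finset.Iic α).erase 0, q j.1 ^ e := by
      rw [← Finset.add_sum_erase _ _ h0mem, pow_zero]
    have hper : ∀ e ∈ (Finset.Iic α).erase 0, q j.1 ^ e ≤ C ^ (α - 1) * q j.1 := by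
      intro e he
      obtain ⟨he0, heα⟩ := Finset.mem_erase.1 he
      rw [Finset.mem_Iic] at heα
      have h1e : 1 ≤ e := Nat.one_le_iff_ne_zero.2 he0
      have hsplit' : q j.1 ^ e = q j.1 ^ (e - 1) * q j.1 := by
        rw [← pow_succ]
        congr 1
        omega
      rw [hsplit']
      refine mul_le_mul_of_nonneg_right ?_ (hq _)
      calc q j.1 ^ (e - 1) ≤ C ^ (e - 1) := pow_le_pow_left₀ (hq _) (hqC _) _
        _ ≤ C ^ (α - 1) := pow_le_pow_right₀ hC1 (by omega)
    have hcard : ((Finset.Iic α).erase 0).card = α := by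
      rw [Finset.card_erase_of_mem h0mem, Nat.card_Iic]; omega
    have hsum2 : ∑ e ∈ (Finset.Iic α).erase 0, q j.1 ^ e
        ≤ (α : ℝ) * (C ^ (α - 1) * q j.1) := by
      have := Finset.sum_le_card_nsmul _ _ _ hper
      rw [hcard] at this
      rwa [nsmul_eq_mul] at this
    calc ∑ e ∈ Finset.Iic α, q j.1 ^ e = 1 + ∑ e ∈ (Finset.Iic α).erase 0, q j.1 ^ e := hsplit
      _ ≤ 1 + (α : ℝ) * (C ^ (α - 1) * q j.1) := by linarith
      _ = (α : ℝ) * C ^ (α - 1) * q j.1 + 1 := by ring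
      _ ≤ Real.exp ((α : ℝ) * C ^ (α - 1) * q j.1) := Real.add_one_le_exp _
  calc ∏ j : Fin s, ∑ e ∈ Finset.Iic α, q j.1 ^ e
      ≤ ∏ j : Fin s, Real.exp ((α : ℝ) * C ^ (α - 1) * q j.1) :=
        Finset.prod_le_prod (fun j _ => Finset.sum_nonneg fun e _ => pow_nonneg (hq _) _)
          (fun j _ => key j)
    _ = Real.exp (∑ j : Fin s, (α : ℝ) * C ^ (α - 1) * q j.1) := by rw [Real.exp_sum]
    _ ≤ Real.exp ((α : ℝ) * C ^ (α - 1) * ∑' j, q j) := by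
        rw [Real.exp_le_exp]
        have : ∑ j : Fin s, (α : ℝ) * C ^ (α - 1) * q j.1
            = (α : ℝ) * C ^ (α - 1) * ∑ j : Fin s, q j.1 := by rw [Finset.mul_sum]
        rw [this]
        refine mul_le_mul_of_nonneg_left ?_ hcoef
        rw [Fin.sum_univ_eq_sum_range (fun i => q i) s]
        exact Summable.sum_le_tsum (Finset.range s) (fun i _ => hq i) hsum
lemma pointwise (α : ℕ) (hα : 1 ≤ α) (lam : ℝ) (hlam0 : 0 < lam) (hlam1 : lam ≤ 1)
    (E M : ℝ) (hE : 0 ≤ E) (hEM : E ≤ M) (hM : 1 ≤ M) (b : ℕ → ℝ) (hb : ∀ j, 0 ≤ b j)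
    (s : ℕ) (ν : Fin s → ℕ) (hν : ∀ j, ν j ≤ α) :
    ((Nat.factorial ((∑ j, ν j) + 2) : ℝ)) ^ lam *
      ∏ j ∈ Finset.univ.filter (fun j : Fin s => 0 < ν j),
        (E * 2 ^ (if ν j = α then 1 else 0) * b j.1 ^ ν j) ^ lam
    ≤ (((∑ j, ν j : ℕ) : ℝ) + 2) * (((∑ j, ν j : ℕ) : ℝ) + 1) *
      (Nat.multinomial Finset.univ ν : ℝ) ^ lam *
      ∏ j, (2 * M * (α : ℝ) * b j.1 ^ lam) ^ ν j := by
  classical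
  have hM0 : (0:ℝ) ≤ M := le_trans zero_le_one hM
  have h2M : (1:ℝ) ≤ 2 * M := by linarith
  have hα1 : (1:ℝ) ≤ (α:ℝ) := by exact_mod_cast hα
  set n := ∑ j, ν j with hn
  set A := ((n:ℝ) + 2) * ((n:ℝ) + 1) with hA
  set B := (Nat.multinomial Finset.univ ν : ℝ) with hB
  have hA0 : 0 ≤ A := by positivity
  have hA1 : 1 ≤ A := by nlinarith [Nat.cast_nonneg (α := ℝ) n]
  have hB0 : 0 ≤ B := Nat.cast_nonneg _
  have hFp0 : (0:ℝ) ≤ ∏ j, ((Nat.factorial (ν j) : ℕ) : ℝ) :=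
    Finset.prod_nonneg fun j _ => Nat.cast_nonneg _
  have hfact : ((Nat.factorial (n + 2) : ℕ) : ℝ)
      = A * (B * ∏ j, ((Nat.factorial (ν j) : ℕ) : ℝ)) := by
    have hspec := Nat.multinomial_spec Finset.univ ν
    have hstep : Nat.factorial (n + 2) = (n + 2) * ((n + 1) * Nat.factorial n) := by
      rw [Nat.factorial_succ, Nat.factorial_succ]
    rw [← hn] at hspec
    rw [hstep, ← hspec]
    push_cast
    ring
  have hfiltereq : ∏ j ∈ Finset.univ.filter (fun j : Fin s => 0 < ν j),
      ((Nat.factorial (ν j) : ℕ) : ℝ) ^ lam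
      = ∏ j, ((Nat.factorial (ν j) : ℕ) : ℝ) ^ lam := by
    refine Finset.prod_subset (Finset.filter_subset _ _) fun j _ hj => ?_
    simp only [Finset.mem_filter, Finset.mem_univ, true_and, not_lt, Nat.le_zero] at hj
    rw [hj]
    simp [Real.one_rpow]
  have hfact_rpow : ((Nat.factorial (n + 2) : ℕ) : ℝ) ^ lam
      = A ^ lam * B ^ lam * ∏ j ∈ Finset.univ.filter (fun j : Fin s => 0 < ν j),
          ((Nat.factorial (ν j) : ℕ) : ℝ) ^ lam := by
    rw [hfact, Real.mul_rpow hA0 (mul_nonneg hB0 hFp0), Real.mul_rpow hB0 hFp0,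
      ← Real.finset_prod_rpow _ _ (fun j _ => Nat.cast_nonneg _) lam, hfiltereq,
      mul_assoc]
  have perj : ∀ j : Fin s, 0 < ν j →
      ((Nat.factorial (ν j) : ℕ) : ℝ) ^ lam *
        (E * 2 ^ (if ν j = α then 1 else 0) * b j.1 ^ ν j) ^ lam
      ≤ (2 * M * (α : ℝ) * b j.1 ^ lam) ^ ν j := by
    intro j hj
    have heα : ν j ≤ α := hν j
    have hfe : ((Nat.factorial (ν j) : ℕ) : ℝ) ≤ (α:ℝ) ^ ν j := by
      have : Nat.factorial (ν j) ≤ α ^ ν j :=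
        le_trans (Nat.factorial_le_pow (ν j)) (Nat.pow_le_pow_left heα (ν j))
      exact_mod_cast this
    have h1 : ((Nat.factorial (ν j) : ℕ) : ℝ) ^ lam ≤ (α:ℝ) ^ ν j := by
      refine le_trans (Real.rpow_le_rpow (Nat.cast_nonneg _) hfe hlam0.le) ?_
      calc ((α:ℝ) ^ ν j) ^ lam ≤ ((α:ℝ) ^ ν j) ^ (1:ℝ) :=
            Real.rpow_le_rpow_of_exponent_le (one_le_pow₀ hα1) hlam1
        _ = (α:ℝ) ^ ν j := Real.rpow_one _
    have hX : (0:ℝ) ≤ E * 2 ^ (if ν j = α then 1 else 0) := by positivity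
    have hXle : E * 2 ^ (if ν j = α then 1 else 0) ≤ 2 * M := by
      have h2 : (2:ℝ) ^ (if ν j = α then 1 else 0) ≤ 2 := by split <;> norm_num
      calc E * 2 ^ (if ν j = α then 1 else 0) ≤ M * 2 :=
            mul_le_mul hEM h2 (by positivity) hM0
        _ = 2 * M := mul_comm M 2
    have h2 : (E * 2 ^ (if ν j = α then 1 else 0) * b j.1 ^ ν j) ^ lam
        = (E * 2 ^ (if ν j = α then 1 else 0)) ^ lam * (b j.1 ^ lam) ^ ν j := by
      rw [Real.mul_rpow hX (pow_nonneg (hb _) _), pow_rpow_comm (hb _) lam (ν j)]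
    have h3 : (E * 2 ^ (if ν j = α then 1 else 0)) ^ lam ≤ 2 * M := by
      calc (E * 2 ^ (if ν j = α then 1 else 0)) ^ lam ≤ (2 * M) ^ lam :=
            Real.rpow_le_rpow hX hXle hlam0.le
        _ ≤ (2 * M) ^ (1:ℝ) := Real.rpow_le_rpow_of_exponent_le h2M hlam1
        _ = 2 * M := Real.rpow_one _
    have expand : (2 * M * (α:ℝ) * b j.1 ^ lam) ^ ν j
        = ((2 * M) ^ ν j * (α:ℝ) ^ ν j) * (b j.1 ^ lam) ^ ν j := by
      rw [mul_pow, mul_pow]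
    rw [h2, expand, ← mul_assoc]
    refine mul_le_mul_of_nonneg_right ?_ (pow_nonneg (Real.rpow_nonneg (hb _) _) _)
    calc ((Nat.factorial (ν j) : ℕ) : ℝ) ^ lam * (E * 2 ^ (if ν j = α then 1 else 0)) ^ lam
        ≤ (α:ℝ) ^ ν j * (2 * M) := mul_le_mul h1 h3 (Real.rpow_nonneg hX lam) (by positivity)
      _ = (2 * M) * (α:ℝ) ^ ν j := mul_comm _ _
      _ ≤ (2 * M) ^ ν j * (α:ℝ) ^ ν j :=
          mul_le_mul_of_nonneg_right (le_self_pow₀ h2M (Nat.pos_iff_ne_zero.1 hj))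
            (by positivity)
  have hprod_ext : ∏ j ∈ Finset.univ.filter (fun j : Fin s => 0 < ν j),
      (2 * M * (α : ℝ) * b j.1 ^ lam) ^ ν j
      = ∏ j, (2 * M * (α : ℝ) * b j.1 ^ lam) ^ ν j := by
    refine Finset.prod_subset (Finset.filter_subset _ _) fun j _ hj => ?_
    simp only [Finset.mem_filter, Finset.mem_univ, true_and, not_lt, Nat.le_zero] at hj
    rw [hj, pow_zero]
  have hAlam : A ^ lam ≤ A := by
    calc A ^ lam ≤ A ^ (1:ℝ) := Real.rpow_le_rpow_of_exponent_le hA1 hlam1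
      _ = A := Real.rpow_one _
  have htermnn : ∀ j : Fin s, 0 ≤ ((Nat.factorial (ν j) : ℕ) : ℝ) ^ lam *
      (E * 2 ^ (if ν j = α then 1 else 0) * b j.1 ^ ν j) ^ lam := fun j =>
    mul_nonneg (Real.rpow_nonneg (Nat.cast_nonneg _) _)
      (Real.rpow_nonneg (mul_nonneg (mul_nonneg hE (by positivity)) (pow_nonneg (hb _) _)) _)
  calc ((Nat.factorial (n + 2) : ℕ) : ℝ) ^ lam *
        ∏ j ∈ Finset.univ.filter (fun j : Fin s => 0 < ν j),
          (E * 2 ^ (if ν j = α then 1 else 0) * b j.1 ^ ν j) ^ lam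
      = (A ^ lam * B ^ lam) *
        ∏ j ∈ Finset.univ.filter (fun j : Fin s => 0 < ν j),
          (((Nat.factorial (ν j) : ℕ) : ℝ) ^ lam *
            (E * 2 ^ (if ν j = α then 1 else 0) * b j.1 ^ ν j) ^ lam) := by
        rw [hfact_rpow, mul_assoc (A ^ lam * B ^ lam), ← Finset.prod_mul_distrib]
    _ ≤ (A * B ^ lam) *
        ∏ j ∈ Finset.univ.filter (fun j : Fin s => 0 < ν j),
          (2 * M * (α : ℝ) * b j.1 ^ lam) ^ ν j := by
        refine mul_le_mul (mul_le_mul_of_nonneg_right hAlam (Real.rpow_nonneg hB0 lam))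
          (Finset.prod_le_prod (fun j _ => htermnn j)
            (fun j hjf => perj j (Finset.mem_filter.1 hjf).2))
          (Finset.prod_nonneg fun j _ => htermnn j)
          (mul_nonneg hA0 (Real.rpow_nonneg hB0 lam))
    _ = A * B ^ lam * ∏ j, (2 * M * (α : ℝ) * b j.1 ^ lam) ^ ν j := by
        rw [hprod_ext]
lemma young_step (lam : ℝ) (hl0 : 0 < lam) (hl1 : lam < 1)
    (g h m : ℕ → ℝ) (hg : ∀ j, 0 ≤ g j) (hh : ∀ j, 0 ≤ h j) (hm : ∀ j, 0 ≤ m j)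
    (hgh : ∀ j, g j ≤ h j ^ lam * m j ^ (1 - lam))
    (s : ℕ) (ν : Fin s → ℕ) (K : ℝ) (hK : 1 ≤ K) :
    K ^ lam * ∏ j, g j.1 ^ ν j ≤ K * ∏ j, h j.1 ^ ν j + ∏ j, m j.1 ^ ν j := by
  have hK0 : (0:ℝ) ≤ K := le_trans zero_le_one hK
  have hprodh : (0:ℝ) ≤ ∏ j, h j.1 ^ ν j := Finset.prod_nonneg fun j _ => pow_nonneg (hh _) _
  have hprodm : (0:ℝ) ≤ ∏ j, m j.1 ^ ν j := Finset.prod_nonneg fun j _ => pow_nonneg (hm _) _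
  have step1 : ∏ j, g j.1 ^ ν j ≤ ∏ j, (h j.1 ^ lam * m j.1 ^ (1 - lam)) ^ ν j :=
    Finset.prod_le_prod (fun j _ => pow_nonneg (hg _) _)
      (fun j _ => pow_le_pow_left₀ (hg _) (hgh _) _)
  have step2 : ∏ j, (h j.1 ^ lam * m j.1 ^ (1 - lam)) ^ ν j
      = (∏ j, h j.1 ^ ν j) ^ lam * (∏ j, m j.1 ^ ν j) ^ (1 - lam) := by
    have hper : ∀ j : Fin s, (h j.1 ^ lam * m j.1 ^ (1 - lam)) ^ ν j
        = (h j.1 ^ ν j) ^ lam * (m j.1 ^ ν j) ^ (1 - lam) := by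
      intro j
      rw [mul_pow, pow_rpow_comm (hh _), pow_rpow_comm (hm _)]
    rw [Finset.prod_congr rfl fun j _ => hper j, Finset.prod_mul_distrib,
      Real.finset_prod_rpow _ _ (fun j _ => pow_nonneg (hh _) _) lam,
      Real.finset_prod_rpow _ _ (fun j _ => pow_nonneg (hm _) _) (1 - lam)]
  calc K ^ lam * ∏ j, g j.1 ^ ν j
      ≤ K ^ lam * ((∏ j, h j.1 ^ ν j) ^ lam * (∏ j, m j.1 ^ ν j) ^ (1 - lam)) := by
        rw [← step2]
        exact mul_le_mul_of_nonneg_left step1 (Real.rpow_nonneg hK0 lam)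
    _ = (K * ∏ j, h j.1 ^ ν j) ^ lam * (∏ j, m j.1 ^ ν j) ^ (1 - lam) := by
        rw [Real.mul_rpow hK0 hprodh, mul_assoc]
    _ ≤ lam * (K * ∏ j, h j.1 ^ ν j) + (1 - lam) * ∏ j, m j.1 ^ ν j :=
        Real.geom_mean_le_arith_mean2_weighted hl0.le (by linarith)
          (mul_nonneg hK0 hprodh) hprodm (by ring)
    _ ≤ K * ∏ j, h j.1 ^ ν j + ∏ j, m j.1 ^ ν j := by
        have h1 : lam * (K * ∏ j, h j.1 ^ ν j) ≤ 1 * (K * ∏ j, h j.1 ^ ν j) :=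
          mul_le_mul_of_nonneg_right (by linarith) (mul_nonneg hK0 hprodh)
        have h2 : (1 - lam) * ∏ j, m j.1 ^ ν j ≤ 1 * ∏ j, m j.1 ^ ν j :=
          mul_le_mul_of_nonneg_right (by linarith) hprodm
        rw [one_mul] at h1 h2
        linarith
end Stmt13Aux
/-- Dimension-independent boundedness of the SPOD-weight sums: under the stated
summability conditions on `(b_j) ∈ ℓ^p` (with the explicit smallness condition
`∑_j b_j < 1/(2α max(E,1))` in the case `λ = 1`), the sums
`S_s = ∑_{0≠ν∈{0,…,α}^s} ((|ν|+2)!)^λ ∏_{j: ν_j>0} (E·2^{δ(ν_j,α)} b_j^{ν_j})^λ`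
are bounded uniformly in `s`. -/
theorem stmt13 (p lam : ℝ) (α : ℕ) (hα : 1 ≤ α) (hp0 : 0 < p) (hp1 : p ≤ 1)
    (hplam : p ≤ lam) (hlam1 : lam ≤ 1) (hlamα : 1 / (α : ℝ) < lam)
    (E : ℝ) (hE : 0 ≤ E) (b : ℕ → ℝ) (hb : ∀ j, 0 ≤ b j)
    (hbp : Summable fun j => b j ^ p)
    (hcase : lam < 1 ∨ (lam = 1 ∧ ∑' j, b j < 1 / (2 * α * max E 1))) :
    ∃ Cbd : ℝ, ∀ s : ℕ,
      ∑ ν ∈ (Finset.Iic fun _ : Fin s => α).erase 0,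
        ((Nat.factorial ((∑ j, ν j) + 2) : ℝ)) ^ lam *
          ∏ j ∈ Finset.univ.filter (fun j : Fin s => 0 < ν j),
            (E * 2 ^ (if ν j = α then 1 else 0) * b j.1 ^ ν j) ^ lam
      ≤ Cbd := by
  classical
  have hM1 : (1:ℝ) ≤ max E 1 := le_max_right _ _
  have hEM : E ≤ max E 1 := le_max_left _ _
  have hM0 : (0:ℝ) ≤ max E 1 := le_trans zero_le_one hM1
  have hlam0 : 0 < lam := lt_of_lt_of_le hp0 hplam
  have hα1 : (1:ℝ) ≤ (α:ℝ) := by exact_mod_cast hα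
  have hα0 : (0:ℝ) < (α:ℝ) := lt_of_lt_of_le one_pos hα1
  have hmembounds : ∀ s : ℕ, ∀ ν ∈ (Finset.Iic fun _ : Fin s => α).erase 0,
      ∀ j : Fin s, ν j ≤ α := by
    intro s ν hν j
    exact (Finset.mem_Iic.1 (Finset.mem_of_mem_erase hν)) j
  rcases hcase with hlt | ⟨hl1, hsmall⟩
  · -- case lam < 1
    have h1l : 0 < 1 - lam := by linarith
    have hM := hM1
    -- the auxiliary exponent y
    have hpy : p ≤ 1 - p * (1 - lam) / lam := by
      have h1 : p * (1 - lam) / lam ≤ 1 - p := by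
        rw [div_le_iff₀ hlam0]
        nlinarith
      linarith
    set y := 1 - p * (1 - lam) / lam with hydef
    have hylam : y * lam + p * (1 - lam) = lam := by
      rw [hydef]
      field_simp
      ring
    have hy0 : 0 < y := lt_of_lt_of_le hp0 hpy
    have hby : Summable (fun j => b j ^ y) := Stmt13Aux.summable_rpow_mono hb hp0 hpy hbp
    set By := ∑' j, b j ^ y with hBydef
    have hBy0 : 0 ≤ By := tsum_nonneg fun j => Real.rpow_nonneg (hb j) y
    set θ := (2 * (By + 1))⁻¹ with hθdef
    have hθ0 : 0 < θ := by rw [hθdef]; exact inv_pos.2 (by linarith)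
    have hθlam0 : (0:ℝ) < θ ^ lam := Real.rpow_pos_of_pos hθ0 lam
    have hX0 : (0:ℝ) ≤ 2 * max E 1 * (α:ℝ) / θ ^ lam := div_nonneg (by positivity) hθlam0.le
    set c' := (2 * max E 1 * (α:ℝ) / θ ^ lam) ^ (1 / (1 - lam)) with hc'def
    have hc'0 : 0 ≤ c' := Real.rpow_nonneg hX0 _
    -- key pointwise identity
    have hkey : ∀ j : ℕ, 2 * max E 1 * (α:ℝ) * b j ^ lam
        = (θ * b j ^ y) ^ lam * (c' * b j ^ p) ^ (1 - lam) := by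
      intro j
      have hc'e : c' ^ (1 - lam) = 2 * max E 1 * (α:ℝ) / θ ^ lam := by
        rw [hc'def, ← Real.rpow_mul hX0, one_div_mul_cancel h1l.ne', Real.rpow_one]
      rw [Real.mul_rpow hθ0.le (Real.rpow_nonneg (hb j) y),
        Real.mul_rpow hc'0 (Real.rpow_nonneg (hb j) p),
        ← Real.rpow_mul (hb j), ← Real.rpow_mul (hb j), hc'e]
      have hbb : b j ^ (y * lam) * b j ^ (p * (1 - lam)) = b j ^ lam := by
        rw [← Real.rpow_add' (hb j) (by rw [hylam]; exact hlam0.ne')]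
        rw [hylam]
      have hre : θ ^ lam * b j ^ (y * lam) * (2 * max E 1 * (α:ℝ) / θ ^ lam * b j ^ (p * (1 - lam)))
          = (θ ^ lam * (2 * max E 1 * (α:ℝ) / θ ^ lam)) * (b j ^ (y * lam) * b j ^ (p * (1 - lam))) := by
        ring
      rw [hre, hbb]
      rw [mul_comm (θ ^ lam) _, div_mul_cancel₀ _ hθlam0.ne']
    -- nonnegativity facts
    have hg0 : ∀ j : ℕ, 0 ≤ 2 * max E 1 * (α:ℝ) * b j ^ lam := fun j =>
      mul_nonneg (by positivity) (Real.rpow_nonneg (hb j) _)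
    have hhf0 : ∀ j : ℕ, 0 ≤ θ * b j ^ y := fun j =>
      mul_nonneg hθ0.le (Real.rpow_nonneg (hb j) _)
    have hmf0 : ∀ j : ℕ, 0 ≤ c' * b j ^ p := fun j =>
      mul_nonneg hc'0 (Real.rpow_nonneg (hb j) _)
    have hq0 : ∀ j : ℕ, 0 ≤ 4 * (c' * b j ^ p) := fun j => mul_nonneg (by norm_num) (hmf0 j)
    -- summability and smallness of hf
    have hfsum : Summable (fun j => θ * b j ^ y) := hby.mul_left θ
    have hfts : ∑' j, θ * b j ^ y < 1 := by
      rw [tsum_mul_left, ← hBydef]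
      have h2 : θ * By ≤ θ * (By + 1) := mul_le_mul_of_nonneg_left (by linarith) hθ0.le
      have h3 : θ * (By + 1) = 2⁻¹ := by
        rw [hθdef]
        field_simp
      rw [h3] at h2
      linarith
    -- mf/ q facts
    have hmsum : Summable (fun j => c' * b j ^ p) := hbp.mul_left c'
    have hqsum : Summable (fun j => 4 * (c' * b j ^ p)) := hmsum.mul_left 4
    set Bp := ∑' j, b j ^ p with hBpdef
    have hqC : ∀ j : ℕ, 4 * (c' * b j ^ p) ≤ max 1 (4 * (c' * Bp)) := by
      intro j
      refine le_trans ?_ (le_max_right _ _)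
      have hle : b j ^ p ≤ Bp := Summable.le_tsum hbp j fun i _ => Real.rpow_nonneg (hb i) p
      have : c' * b j ^ p ≤ c' * Bp := mul_le_mul_of_nonneg_left hle hc'0
      linarith
    have hC1 : (1:ℝ) ≤ max 1 (4 * (c' * Bp)) := le_max_left _ _
    -- the bound
    refine ⟨(∑' n : ℕ, ((n:ℝ)+2)*((n:ℝ)+1)*(∑' j, θ * b j ^ y)^n)
      + 2 * Real.exp ((α : ℝ) * (max 1 (4 * (c' * Bp))) ^ (α - 1) * ∑' j, 4 * (c' * b j ^ p)),
      fun s => ?_⟩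
    have stepA : ∑ ν ∈ (Finset.Iic fun _ : Fin s => α).erase 0,
        ((Nat.factorial ((∑ j, ν j) + 2) : ℝ)) ^ lam *
          ∏ j ∈ Finset.univ.filter (fun j : Fin s => 0 < ν j),
            (E * 2 ^ (if ν j = α then 1 else 0) * b j.1 ^ ν j) ^ lam
        ≤ ∑ ν ∈ (Finset.Iic fun _ : Fin s => α).erase 0,
            (((∑ j, ν j : ℕ) : ℝ) + 2) * (((∑ j, ν j : ℕ) : ℝ) + 1) *
              (Nat.multinomial Finset.univ ν : ℝ) ^ lam *
              ∏ j, (2 * max E 1 * (α : ℝ) * b j.1 ^ lam) ^ ν j :=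
      Finset.sum_le_sum fun ν hν => Stmt13Aux.pointwise α hα lam hlam0 hlam1 E (max E 1)
        hE hEM hM1 b hb s ν (hmembounds s ν hν)
    have stepB : ∀ s' : ℕ, ∀ ν : Fin s' → ℕ,
        (((∑ j, ν j : ℕ) : ℝ) + 2) * (((∑ j, ν j : ℕ) : ℝ) + 1) *
            (Nat.multinomial Finset.univ ν : ℝ) ^ lam *
            ∏ j, (2 * max E 1 * (α : ℝ) * b j.1 ^ lam) ^ ν j
        ≤ (((∑ j, ν j : ℕ) : ℝ) + 2) * (((∑ j, ν j : ℕ) : ℝ) + 1) *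
            (Nat.multinomial Finset.univ ν : ℝ) * ∏ j, (θ * b j.1 ^ y) ^ ν j
          + (((∑ j, ν j : ℕ) : ℝ) + 2) * (((∑ j, ν j : ℕ) : ℝ) + 1) *
            ∏ j, (c' * b j.1 ^ p) ^ ν j := by
      intro s' ν
      have hK1 : (1:ℝ) ≤ (Nat.multinomial Finset.univ ν : ℝ) := by
        exact_mod_cast Nat.succ_le_of_lt (Nat.multinomial_pos _ _)
      have hyoung := Stmt13Aux.young_step lam hlam0 hlt
        (fun j => 2 * max E 1 * (α:ℝ) * b j ^ lam) (fun j => θ * b j ^ y)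
        (fun j => c' * b j ^ p) hg0 hhf0 hmf0 (fun j => le_of_eq (hkey j)) s' ν
        (Nat.multinomial Finset.univ ν : ℝ) hK1
      have hA0' : (0:ℝ) ≤ (((∑ j, ν j : ℕ) : ℝ) + 2) * (((∑ j, ν j : ℕ) : ℝ) + 1) := by
        positivity
      calc (((∑ j, ν j : ℕ) : ℝ) + 2) * (((∑ j, ν j : ℕ) : ℝ) + 1) *
            (Nat.multinomial Finset.univ ν : ℝ) ^ lam *
            ∏ j, (2 * max E 1 * (α : ℝ) * b j.1 ^ lam) ^ ν j
          = (((∑ j, ν j : ℕ) : ℝ) + 2) * (((∑ j, ν j : ℕ) : ℝ) + 1) *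
            ((Nat.multinomial Finset.univ ν : ℝ) ^ lam *
              ∏ j, (2 * max E 1 * (α : ℝ) * b j.1 ^ lam) ^ ν j) := by rw [mul_assoc]
        _ ≤ (((∑ j, ν j : ℕ) : ℝ) + 2) * (((∑ j, ν j : ℕ) : ℝ) + 1) *
            ((Nat.multinomial Finset.univ ν : ℝ) * ∏ j, (θ * b j.1 ^ y) ^ ν j
              + ∏ j, (c' * b j.1 ^ p) ^ ν j) :=
            mul_le_mul_of_nonneg_left hyoung hA0'
        _ = (((∑ j, ν j : ℕ) : ℝ) + 2) * (((∑ j, ν j : ℕ) : ℝ) + 1) *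
            (Nat.multinomial Finset.univ ν : ℝ) * ∏ j, (θ * b j.1 ^ y) ^ ν j
          + (((∑ j, ν j : ℕ) : ℝ) + 2) * (((∑ j, ν j : ℕ) : ℝ) + 1) *
            ∏ j, (c' * b j.1 ^ p) ^ ν j := by ring
    have stepC : ∑ ν ∈ (Finset.Iic fun _ : Fin s => α).erase 0,
        (((∑ j, ν j : ℕ) : ℝ) + 2) * (((∑ j, ν j : ℕ) : ℝ) + 1) *
          (Nat.multinomial Finset.univ ν : ℝ) * ∏ j, (θ * b j.1 ^ y) ^ ν j
        ≤ ∑' n : ℕ, ((n:ℝ)+2)*((n:ℝ)+1)*(∑' j, θ * b j ^ y)^n := by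
      refine le_trans (Finset.sum_le_sum_of_subset_of_nonneg (Finset.erase_subset _ _)
        fun ν _ _ => mul_nonneg (mul_nonneg (by positivity) (Nat.cast_nonneg _))
          (Finset.prod_nonneg fun j _ => pow_nonneg (hhf0 _) _)) ?_
      exact Stmt13Aux.master α (fun j => θ * b j ^ y) hhf0 hfsum hfts s
    have stepD : ∑ ν ∈ (Finset.Iic fun _ : Fin s => α).erase 0,
        (((∑ j, ν j : ℕ) : ℝ) + 2) * (((∑ j, ν j : ℕ) : ℝ) + 1) *
          ∏ j, (c' * b j.1 ^ p) ^ ν j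
        ≤ 2 * Real.exp ((α : ℝ) * (max 1 (4 * (c' * Bp))) ^ (α - 1)
            * ∑' j, 4 * (c' * b j ^ p)) := by
      have hper : ∀ ν : Fin s → ℕ,
          (((∑ j, ν j : ℕ) : ℝ) + 2) * (((∑ j, ν j : ℕ) : ℝ) + 1) *
            ∏ j, (c' * b j.1 ^ p) ^ ν j
          ≤ 2 * ∏ j, (4 * (c' * b j.1 ^ p)) ^ ν j := by
        intro ν
        have hprod0 : (0:ℝ) ≤ ∏ j, (c' * b j.1 ^ p) ^ ν j :=
          Finset.prod_nonneg fun j _ => pow_nonneg (hmf0 _) _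
        calc (((∑ j, ν j : ℕ) : ℝ) + 2) * (((∑ j, ν j : ℕ) : ℝ) + 1) *
              ∏ j, (c' * b j.1 ^ p) ^ ν j
            ≤ 2 * 4 ^ (∑ j, ν j) * ∏ j, (c' * b j.1 ^ p) ^ ν j :=
              mul_le_mul_of_nonneg_right (Stmt13Aux.quad_le_two_four_pow _) hprod0
          _ = 2 * ((4:ℝ) ^ (∑ j, ν j) * ∏ j, (c' * b j.1 ^ p) ^ ν j) := by rw [mul_assoc]
          _ = 2 * ∏ j, (4 * (c' * b j.1 ^ p)) ^ ν j := by
              rw [← Finset.prod_pow_eq_pow_sum, ← Finset.prod_mul_distrib]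
              congr 1
              exact Finset.prod_congr rfl fun j _ => (mul_pow _ _ _).symm
      refine le_trans (Finset.sum_le_sum fun ν _ => hper ν) ?_
      have hext : ∑ ν ∈ (Finset.Iic fun _ : Fin s => α).erase 0,
          2 * ∏ j, (4 * (c' * b j.1 ^ p)) ^ ν j
          ≤ ∑ ν ∈ Finset.Iic (fun _ : Fin s => α),
            2 * ∏ j, (4 * (c' * b j.1 ^ p)) ^ ν j :=
        Finset.sum_le_sum_of_subset_of_nonneg (Finset.erase_subset _ _)
          fun ν _ _ => mul_nonneg (by norm_num)
            (Finset.prod_nonneg fun j _ => pow_nonneg (hq0 _) _)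
      refine le_trans hext ?_
      rw [← Finset.mul_sum]
      refine mul_le_mul_of_nonneg_left ?_ (by norm_num)
      exact Stmt13Aux.master2 α hα (fun j => 4 * (c' * b j ^ p)) hq0
        (max 1 (4 * (c' * Bp))) hC1 hqC hqsum s
    refine le_trans stepA (le_trans (Finset.sum_le_sum fun ν _ => stepB s ν) ?_)
    rw [Finset.sum_add_distrib]
    exact add_le_add stepC stepD
  · -- case lam = 1
    subst hl1
    have hsb : Summable b := by
      have := Stmt13Aux.summable_rpow_mono hb hp0 hp1 hbp
      simpa [Real.rpow_one] using this
    have hh0 : ∀ j : ℕ, 0 ≤ 2 * max E 1 * (α:ℝ) * b j ^ (1:ℝ) := fun j =>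
      mul_nonneg (by positivity) (Real.rpow_nonneg (hb j) _)
    have hhsum : Summable (fun j => 2 * max E 1 * (α:ℝ) * b j ^ (1:ℝ)) := by
      refine (hsb.mul_left (2 * max E 1 * (α:ℝ))).congr fun j => ?_
      rw [Real.rpow_one]
    have hhts : (∑' j, 2 * max E 1 * (α:ℝ) * b j ^ (1:ℝ)) < 1 := by
      have heq : (∑' j, 2 * max E 1 * (α:ℝ) * b j ^ (1:ℝ))
          = 2 * max E 1 * (α:ℝ) * ∑' j, b j := by
        rw [← tsum_mul_left]
        exact tsum_congr fun j => by rw [Real.rpow_one]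
      rw [heq]
      have hpos : (0:ℝ) < 2 * max E 1 * (α:ℝ) := by positivity
      calc 2 * max E 1 * (α:ℝ) * ∑' j, b j
          < 2 * max E 1 * (α:ℝ) * (1 / (2 * α * max E 1)) :=
            mul_lt_mul_of_pos_left hsmall hpos
        _ = 1 := by
            field_simp
    refine ⟨∑' n : ℕ, ((n:ℝ)+2)*((n:ℝ)+1)*(∑' j, 2 * max E 1 * (α:ℝ) * b j ^ (1:ℝ))^n,
      fun s => ?_⟩
    have step1 : ∑ ν ∈ (Finset.Iic fun _ : Fin s => α).erase 0,
        ((Nat.factorial ((∑ j, ν j) + 2) : ℝ)) ^ (1:ℝ) *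
          ∏ j ∈ Finset.univ.filter (fun j : Fin s => 0 < ν j),
            (E * 2 ^ (if ν j = α then 1 else 0) * b j.1 ^ ν j) ^ (1:ℝ)
        ≤ ∑ ν ∈ (Finset.Iic fun _ : Fin s => α).erase 0,
            (((∑ j, ν j : ℕ) : ℝ) + 2) * (((∑ j, ν j : ℕ) : ℝ) + 1) *
              (Nat.multinomial Finset.univ ν : ℝ) ^ (1:ℝ) *
              ∏ j, (2 * max E 1 * (α : ℝ) * b j.1 ^ (1:ℝ)) ^ ν j := by
      refine Finset.sum_le_sum fun ν hν => ?_
      exact Stmt13Aux.pointwise α hα 1 one_pos le_rfl E (max E 1) hE hEM hM1 b hb s ν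
        (hmembounds s ν hν)
    have step1b : ∑ ν ∈ (Finset.Iic fun _ : Fin s => α).erase 0,
        (((∑ j, ν j : ℕ) : ℝ) + 2) * (((∑ j, ν j : ℕ) : ℝ) + 1) *
          (Nat.multinomial Finset.univ ν : ℝ) ^ (1:ℝ) *
          ∏ j, (2 * max E 1 * (α : ℝ) * b j.1 ^ (1:ℝ)) ^ ν j
        = ∑ ν ∈ (Finset.Iic fun _ : Fin s => α).erase 0,
        (((∑ j, ν j : ℕ) : ℝ) + 2) * (((∑ j, ν j : ℕ) : ℝ) + 1) *
          (Nat.multinomial Finset.univ ν : ℝ) *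
          ∏ j, (2 * max E 1 * (α : ℝ) * b j.1 ^ (1:ℝ)) ^ ν j := by
      refine Finset.sum_congr rfl fun ν _ => ?_
      rw [Real.rpow_one]
    have step2 : ∑ ν ∈ (Finset.Iic fun _ : Fin s => α).erase 0,
        (((∑ j, ν j : ℕ) : ℝ) + 2) * (((∑ j, ν j : ℕ) : ℝ) + 1) *
          (Nat.multinomial Finset.univ ν : ℝ) *
          ∏ j, (2 * max E 1 * (α : ℝ) * b j.1 ^ (1:ℝ)) ^ ν j
        ≤ ∑ ν ∈ Finset.Iic (fun _ : Fin s => α),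
        (((∑ j, ν j : ℕ) : ℝ) + 2) * (((∑ j, ν j : ℕ) : ℝ) + 1) *
          (Nat.multinomial Finset.univ ν : ℝ) *
          ∏ j, (2 * max E 1 * (α : ℝ) * b j.1 ^ (1:ℝ)) ^ ν j := by
      refine Finset.sum_le_sum_of_subset_of_nonneg (Finset.erase_subset _ _) fun ν _ _ => ?_
      refine mul_nonneg (mul_nonneg (by positivity) (Nat.cast_nonneg _))
        (Finset.prod_nonneg fun j _ => pow_nonneg (hh0 _) _)
    exact le_trans step1 (le_trans (le_of_eq step1b) (le_trans step2
      (Stmt13Aux.master α (fun j => 2 * max E 1 * (α:ℝ) * b j ^ (1:ℝ)) hh0 hhsum hhts s)))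
end
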